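/- Every point of the UL-flexibility set F(u,l) is a convex combination of permutations of the T+1 vertex vectors p^(0), ..., p^(T): F(u,l) equals the convex hull of {Π·p^(k) : Π a T×T permutation matrix, k ∈ {0,...,T}}, where p^(k)_t = (u_t − u_{t−1})/Δt for t ≤ k and (l_{T−t+1} − l_{T−t})/Δt otherwise. -/

import Mathlib

open Finset

noncomputable section

/-- The UL-flexibility set: all signals `p` such that for every nonempty
subset `S` of time indices with `|S| = k`, `l k ≤ Δt * ∑_{t∈S} p t ≤ u k`. -/
def ULset (T : ℕ) (Δt : ℝ) (u l : ℕ → ℝ) : Set (Fin T → ℝ) :=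
  {p | ∀ S : Finset (Fin T), S.Nonempty →
    l S.card ≤ Δt * ∑ t ∈ S, p t ∧ Δt * ∑ t ∈ S, p t ≤ u S.card}

/-- Zero extension of a parameter vector: value 0 at index 0. -/
def ZExt (v : ℕ → ℝ) : ℕ → ℝ := fun k => if k = 0 then 0 else v k

/-- Valid UL parameters: the zero-extension of `u` is concave, nonnegative and
increasing; the zero-extension of `l` is convex, nonnegative and increasing; and
the zero-extension of `u` plus the reversed zero-extension of `l` is increasing. -/
def ValidUL (T : ℕ) (u l : ℕ → ℝ) : Prop :=
  (∀ j, 1 ≤ j → j + 1 ≤ T → ZExt u (j - 1) + ZExt u (j + 1) ≤ 2 * ZExt u j) ∧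
  (∀ k, k ≤ T → 0 ≤ ZExt u k) ∧
  (∀ j, j + 1 ≤ T → ZExt u j ≤ ZExt u (j + 1)) ∧
  (∀ j, 1 ≤ j → j + 1 ≤ T → 2 * ZExt l j ≤ ZExt l (j - 1) + ZExt l (j + 1)) ∧
  (∀ k, k ≤ T → 0 ≤ ZExt l k) ∧
  (∀ j, j + 1 ≤ T → ZExt l j ≤ ZExt l (j + 1)) ∧
  (∀ j, 1 ≤ j → j ≤ T →
    ZExt l (T - j + 1) - ZExt l (T - j) ≤ ZExt u j - ZExt u (j - 1))

/-- Vertex candidate `p^(k)` (0-based time index `t` corresponds to paper index `t+1`). -/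
def ULvertex (T : ℕ) (Δt : ℝ) (u l : ℕ → ℝ) (k : ℕ) : Fin T → ℝ :=
  fun t => if (t : ℕ) < k then (ZExt u ((t : ℕ) + 1) - ZExt u (t : ℕ)) / Δt
           else (ZExt l (T - (t : ℕ)) - ZExt l (T - (t : ℕ) - 1)) / Δt

namespace ULProof

open scoped Classical

variable {T : ℕ} {Δt : ℝ} {u l : ℕ → ℝ}

/-- prefix set of indices `< m`. -/
def pref (T m : ℕ) : Finset (Fin T) := univ.filter (fun t => (t : ℕ) < m)

/-- suffix set of indices `≥ T - m`. -/
def suff (T m : ℕ) : Finset (Fin T) := univ.filter (fun t => T - m ≤ (t : ℕ))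

lemma mem_pref {t : Fin T} {m : ℕ} : t ∈ pref T m ↔ (t : ℕ) < m := by simp [pref]

lemma mem_suff {t : Fin T} {m : ℕ} : t ∈ suff T m ↔ T - m ≤ (t : ℕ) := by simp [suff]

lemma card_pref {m : ℕ} (hm : m ≤ T) : (pref T m).card = m := by
  have : pref T m
      = Finset.attachFin (Finset.range m) (fun x hx => lt_of_lt_of_le (Finset.mem_range.mp hx) hm) := by
    ext t; simp [mem_pref]
  rw [this, Finset.card_attachFin, Finset.card_range]

lemma card_suff {m : ℕ} (hm : m ≤ T) : (suff T m).card = m := by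
  have : suff T m
      = Finset.attachFin (Finset.Ico (T - m) T) (fun x hx => (Finset.mem_Ico.mp hx).2) := by
    ext t; simp [mem_suff, Fin.is_lt]
  rw [this, Finset.card_attachFin, Nat.card_Ico]
  omega

lemma pref_zero : pref T 0 = ∅ := by
  ext t; simp [mem_pref]

lemma suff_zero : suff T 0 = ∅ := by
  ext t
  simp only [mem_suff, Finset.notMem_empty, iff_false, not_le, Nat.sub_zero]
  exact t.2

lemma pref_succ {m : ℕ} (hm : m < T) :
    pref T (m + 1) = insert ⟨m, hm⟩ (pref T m) := by
  ext t; simp [mem_pref, Fin.ext_iff]; omega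

lemma suff_succ {m : ℕ} (hm : m < T) :
    suff T (m + 1) = insert ⟨T - m - 1, by omega⟩ (suff T m) := by
  ext t; simp [mem_suff, Fin.ext_iff]; omega

/-- `Δt` times prefix sum. -/
def SP (Δt : ℝ) (p : Fin T → ℝ) (m : ℕ) : ℝ := Δt * ∑ t ∈ pref T m, p t

/-- `Δt` times suffix sum. -/
def SS (Δt : ℝ) (p : Fin T → ℝ) (m : ℕ) : ℝ := Δt * ∑ t ∈ suff T m, p t

lemma SP_zero (p : Fin T → ℝ) : SP Δt p 0 = 0 := by simp [SP, pref_zero]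

lemma SS_zero (p : Fin T → ℝ) : SS Δt p 0 = 0 := by simp [SS, suff_zero]

lemma SP_succ (p : Fin T → ℝ) {m : ℕ} (hm : m < T) :
    SP Δt p (m + 1) = SP Δt p m + Δt * p ⟨m, hm⟩ := by
  rw [SP, pref_succ hm, Finset.sum_insert (by simp [mem_pref])]
  rw [SP]; ring

lemma SS_succ (p : Fin T → ℝ) {m : ℕ} (hm : m < T) :
    SS Δt p (m + 1) = SS Δt p m + Δt * p ⟨T - m - 1, by omega⟩ := by
  rw [SS, suff_succ hm, Finset.sum_insert (by simp [mem_suff]; omega)]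
  rw [SS]; ring

lemma SS_succ' (p : Fin T → ℝ) {m : ℕ} (hm : m < T) {i : Fin T} (hi : (i : ℕ) = T - m - 1) :
    SS Δt p (m + 1) = SS Δt p m + Δt * p i := by
  have h : i = ⟨T - m - 1, by omega⟩ := by
    rw [Fin.ext_iff]
    exact hi
  rw [h]
  exact SS_succ p hm

lemma aux_le {m : ℕ} (f : Fin m → ℕ) (hf : StrictMono f) : ∀ i : Fin m, (i : ℕ) ≤ f i := by
  rintro ⟨v, hv⟩
  induction v with
  | zero => exact Nat.zero_le _
  | succ n ih =>
      have hn : n < m := by omega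
      have h1 : f ⟨n, hn⟩ < f ⟨n + 1, hv⟩ := hf (by simp [Fin.lt_def])
      have h2 : n ≤ f ⟨n, hn⟩ := by simpa using ih hn
      simp only [Fin.val_mk]
      omega
  
lemma aux_le' {m : ℕ} (f : Fin m → ℕ) (hf : StrictMono f) (hT : ∀ i, f i < T) :
    ∀ i : Fin m, f i ≤ T - m + (i : ℕ) := by
  intro i
  have hg : StrictMono (fun j : Fin m => T - 1 - f j.rev) := by
    intro a b hab
    have h1 : b.rev < a.rev := by
      rw [Fin.lt_def]; simp [Fin.val_rev]; omega
    have h2 := hf h1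
    have h3 := hT a.rev
    simp only []
    omega
  have := aux_le _ hg i.rev
  have h4 : i.rev.rev = i := by simp
  have h5 : (i.rev : ℕ) = m - 1 - (i : ℕ) := by simp [Fin.val_rev]; omega
  rw [h4] at this
  have h6 := hT i
  have h7 := i.2
  omega

lemma sum_le_sum_pref (p : Fin T → ℝ) (hp : Antitone p) (S : Finset (Fin T)) :
    ∑ t ∈ S, p t ≤ ∑ t ∈ pref T S.card, p t := by
  set m := S.card with hmdef
  have hm : m ≤ T := by
    have := Finset.card_le_univ S
    simpa [hmdef, Fintype.card_fin] using this
  have e := S.orderIsoOfFin hmdef.symm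
  have h1 : ∑ t ∈ S, p t = ∑ i : Fin m, p (e i) := by
    rw [← Finset.sum_coe_sort S p]
    exact (Fintype.sum_equiv e.toEquiv _ _ (fun i => rfl)).symm
  have hfmono : StrictMono (fun i : Fin m => ((e i : Fin T) : ℕ)) := by
    intro a b hab
    have : (e a : Fin T) < (e b : Fin T) := e.strictMono hab
    exact this
  have h2 : ∀ i : Fin m, p (e i) ≤ p ⟨(i : ℕ), lt_of_lt_of_le i.2 hm⟩ := by
    intro i
    apply hp
    rw [Fin.le_def]
    exact aux_le _ hfmono i
  have h3 : ∑ i : Fin m, p (⟨(i : ℕ), lt_of_lt_of_le i.2 hm⟩ : Fin T)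
      = ∑ t ∈ pref T m, p t := by
    apply Finset.sum_bij (fun (i : Fin m) _ => (⟨(i : ℕ), lt_of_lt_of_le i.2 hm⟩ : Fin T))
    · intro a _; simp [mem_pref]
    · intro a _ b _ hab; simpa [Fin.ext_iff] using hab
    · intro t ht
      exact ⟨⟨(t : ℕ), mem_pref.mp ht⟩, Finset.mem_univ _, by simp [Fin.ext_iff]⟩
    · intro a _; rfl
  calc ∑ t ∈ S, p t = ∑ i : Fin m, p (e i) := h1
    _ ≤ ∑ i : Fin m, p ⟨(i : ℕ), lt_of_lt_of_le i.2 hm⟩ := Finset.sum_le_sum (fun i _ => h2 i)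
    _ = ∑ t ∈ pref T m, p t := h3

lemma sum_suff_le_sum (p : Fin T → ℝ) (hp : Antitone p) (S : Finset (Fin T)) :
    ∑ t ∈ suff T S.card, p t ≤ ∑ t ∈ S, p t := by
  set m := S.card with hmdef
  have hm : m ≤ T := by
    have := Finset.card_le_univ S
    simpa [hmdef, Fintype.card_fin] using this
  have e := S.orderIsoOfFin hmdef.symm
  have h1 : ∑ t ∈ S, p t = ∑ i : Fin m, p (e i) := by
    rw [← Finset.sum_coe_sort S p]
    exact (Fintype.sum_equiv e.toEquiv _ _ (fun i => rfl)).symm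
  have hfmono : StrictMono (fun i : Fin m => ((e i : Fin T) : ℕ)) := by
    intro a b hab
    exact e.strictMono hab
  have hub : ∀ i : Fin m, ((e i : Fin T) : ℕ) ≤ T - m + (i : ℕ) :=
    aux_le' _ hfmono (fun i => (e i : Fin T).2)
  have h2 : ∀ i : Fin m, p (⟨T - m + (i : ℕ), by omega⟩ : Fin T) ≤ p (e i) := by
    intro i
    apply hp
    rw [Fin.le_def]
    exact hub i
  have h3 : ∑ i : Fin m, p (⟨T - m + (i : ℕ), by omega⟩ : Fin T)
      = ∑ t ∈ suff T m, p t := by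
    apply Finset.sum_bij (fun (i : Fin m) _ => (⟨T - m + (i : ℕ), by omega⟩ : Fin T))
    · intro a _; simp [mem_suff]
    · intro a _ b _ hab; simpa [Fin.ext_iff] using hab
    · intro t ht
      refine ⟨⟨(t : ℕ) - (T - m), by have := t.2; have := mem_suff.mp ht; omega⟩,
        Finset.mem_univ _, by have := mem_suff.mp ht; simp [Fin.ext_iff]; omega⟩
    · intro a _; rfl
  calc ∑ t ∈ suff T m, p t = ∑ i : Fin m, p ⟨T - m + (i : ℕ), by omega⟩ := h3.symm
    _ ≤ ∑ i : Fin m, p (e i) := Finset.sum_le_sum (fun i _ => h2 i)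
    _ = ∑ t ∈ S, p t := h1.symm

/-- Constraint index: subset plus Bool (`true` = upper bound). -/
abbrev Con (T : ℕ) := Finset (Fin T) × Bool

def cval (Δt : ℝ) (p : Fin T → ℝ) (c : Con T) : ℝ :=
  if c.2 then Δt * ∑ t ∈ c.1, p t else -(Δt * ∑ t ∈ c.1, p t)

def cbd (T : ℕ) (u l : ℕ → ℝ) (c : Con T) : ℝ :=
  if c.2 then ZExt u c.1.card else -(ZExt l c.1.card)

def Feas (T : ℕ) (Δt : ℝ) (u l : ℕ → ℝ) (p : Fin T → ℝ) : Prop :=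
  ∀ c : Con T, cval Δt p c ≤ cbd T u l c

lemma feas_iff (p : Fin T → ℝ) : Feas T Δt u l p ↔ p ∈ ULset T Δt u l := by
  constructor
  · intro h S hS
    have hc : S.card ≠ 0 := by
      simpa [Finset.card_eq_zero] using hS.ne_empty
    have h1 := h (S, true)
    have h2 := h (S, false)
    simp only [cval, cbd, if_pos, if_true] at h1
    simp only [cval, cbd, if_false, Bool.false_eq_true] at h2
    rw [ZExt, if_neg hc] at h1
    rw [ZExt, if_neg hc] at h2
    constructor <;> linarith
  · rintro h ⟨S, b⟩
    by_cases hS : S = ∅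
    · subst hS
      cases b <;> simp [cval, cbd, ZExt]
    · have hne : S.Nonempty := Finset.nonempty_iff_ne_empty.mpr hS
      have hc : S.card ≠ 0 := by
        simpa [Finset.card_eq_zero] using hS
      have := h S hne
      cases b <;> simp only [cval, cbd, if_true, if_false, Bool.false_eq_true, ZExt, if_neg hc] <;>
        linarith [this.1, this.2]

lemma feas_SP (hp : Feas T Δt u l p) {m : ℕ} (hm : m ≤ T) : SP Δt p m ≤ ZExt u m := by
  have := hp (pref T m, true)
  simpa [cval, cbd, card_pref hm, SP] using this

lemma feas_SS (hp : Feas T Δt u l p) {m : ℕ} (hm : m ≤ T) : ZExt l m ≤ SS Δt p m := by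
  have := hp (suff T m, false)
  simp only [cval, cbd, Bool.false_eq_true, if_false, card_suff hm] at this
  simp only [SS]
  linarith

lemma feas_of_sorted (hΔt : 0 < Δt) (p : Fin T → ℝ) (hp : Antitone p)
    (h : ∀ m, m ≤ T → SP Δt p m ≤ ZExt u m ∧ ZExt l m ≤ SS Δt p m) :
    Feas T Δt u l p := by
  rintro ⟨S, b⟩
  have hm : S.card ≤ T := by
    have := Finset.card_le_univ S
    simpa [Fintype.card_fin] using this
  have h1 : Δt * ∑ t ∈ S, p t ≤ SP Δt p S.card := by
    rw [SP]
    exact mul_le_mul_of_nonneg_left (sum_le_sum_pref p hp S) hΔt.le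
  have h2 : SS Δt p S.card ≤ Δt * ∑ t ∈ S, p t := by
    rw [SS]
    exact mul_le_mul_of_nonneg_left (sum_suff_le_sum p hp S) hΔt.le
  have := h S.card hm
  cases b <;> simp only [cval, cbd, if_true, Bool.false_eq_true, if_false] <;> linarith [this.1, this.2]

lemma sum_comp_perm (p : Fin T → ℝ) (σ : Equiv.Perm (Fin T)) (S : Finset (Fin T)) :
    ∑ t ∈ S, p (σ t) = ∑ t ∈ S.image σ, p t := by
  rw [Finset.sum_image (fun x _ y _ h => σ.injective h)]

lemma feas_comp (hp : Feas T Δt u l p) (σ : Equiv.Perm (Fin T)) :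
    Feas T Δt u l (p ∘ σ) := by
  rintro ⟨S, b⟩
  have hcard : (S.image σ).card = S.card := Finset.card_image_of_injective _ σ.injective
  have := hp (S.image σ, b)
  cases b <;>
    simp only [cval, cbd, if_true, Bool.false_eq_true, if_false, Function.comp,
      sum_comp_perm p σ S, hcard] at this ⊢ <;> linarith

section Valid

variable (hv : ValidUL T u l)
include hv

lemma u_mono {a b : ℕ} (hab : a ≤ b) (hbT : b ≤ T) : ZExt u a ≤ ZExt u b := by
  induction b, hab using Nat.le_induction with
  | base => exact le_refl _
  | succ b hab ih =>
      have h1 := ih (by omega)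
      have h2 := hv.2.2.1 b (by omega)
      linarith

lemma cross_sum {a b : ℕ} (hab : a ≤ b) (hbT : b ≤ T) :
    ZExt l (T - a) - ZExt l (T - b) ≤ ZExt u b - ZExt u a := by
  induction b, hab using Nat.le_induction with
  | base => simp
  | succ b hab ih =>
      have h1 := ih (by omega)
      have h2 := hv.2.2.2.2.2.2 (b + 1) (by omega) hbT
      have h3 : T - (b + 1) + 1 = T - b := by omega
      have h4 : b + 1 - 1 = b := by omega
      rw [h3, h4] at h2
      linarith

lemma SP_vertex (hΔt : Δt ≠ 0) {k m : ℕ} (hm : m ≤ T) :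
    SP Δt (ULvertex T Δt u l k) m =
      if m ≤ k then ZExt u m else ZExt u k + (ZExt l (T - k) - ZExt l (T - m)) := by
  clear hv
  induction m with
  | zero => simp [SP_zero, ZExt]
  | succ m ih =>
    have hmT : m < T := by omega
    rw [SP_succ _ hmT, ih (by omega)]
    have hval : (ULvertex T Δt u l k) ⟨m, hmT⟩
        = if m < k then (ZExt u (m + 1) - ZExt u m) / Δt
          else (ZExt l (T - m) - ZExt l (T - m - 1)) / Δt := rfl
    rw [hval]
    by_cases h1 : m + 1 ≤ k
    · rw [if_pos (by omega : m ≤ k), if_pos (by omega : m < k), if_pos h1]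
      field_simp
      ring
    · by_cases h2 : m ≤ k
      · have hmk : m = k := by omega
        subst hmk
        rw [if_pos h2, if_neg (by omega), if_neg (by omega)]
        have h3 : T - m - 1 = T - (m + 1) := by omega
        rw [h3]
        field_simp
      · rw [if_neg h2, if_neg (by omega), if_neg (by omega)]
        have h3 : T - m - 1 = T - (m + 1) := by omega
        rw [h3]
        field_simp
        ring

lemma SS_vertex (hΔt : Δt ≠ 0) {k m : ℕ} (hk : k ≤ T) (hm : m ≤ T) :
    SS Δt (ULvertex T Δt u l k) m =
      if m ≤ T - k then ZExt l m else ZExt l (T - k) + (ZExt u k - ZExt u (T - m)) := by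
  clear hv
  induction m with
  | zero => simp [SS_zero, ZExt]
  | succ m ih =>
    have hmT : m < T := by omega
    rw [SS_succ _ hmT, ih (by omega)]
    have hval : (ULvertex T Δt u l k) ⟨T - m - 1, by omega⟩
        = if T - m - 1 < k then (ZExt u (T - m - 1 + 1) - ZExt u (T - m - 1)) / Δt
          else (ZExt l (T - (T - m - 1)) - ZExt l (T - (T - m - 1) - 1)) / Δt := rfl
    rw [hval]
    by_cases h1 : m + 1 ≤ T - k
    · rw [if_pos (by omega : m ≤ T - k), if_neg (by omega : ¬ (T - m - 1 < k)), if_pos h1]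
      have h3 : T - (T - m - 1) = m + 1 := by omega
      have h4 : T - (T - m - 1) - 1 = m := by omega
      rw [h4, h3]
      field_simp
      ring
    · by_cases h2 : m ≤ T - k
      · have hmk : m = T - k := by omega
        rw [if_pos h2, if_pos (by omega : T - m - 1 < k), if_neg (by omega)]
        have h3 : T - m - 1 + 1 = T - m := by omega
        have h8 : T - (m + 1) = T - m - 1 := by omega
        rw [h3, h8, ← hmk]
        have h5 : T - m = k := by omega
        rw [h5]
        field_simp
      · rw [if_neg h2, if_pos (by omega : T - m - 1 < k), if_neg (by omega)]
        have h3 : T - m - 1 + 1 = T - m := by omega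
        have h6 : T - (m + 1) = T - m - 1 := by omega
        rw [h3, h6]
        field_simp
        ring

lemma antitone_of_step (f : Fin T → ℝ)
    (h : ∀ n (hn : n + 1 < T), f ⟨n + 1, hn⟩ ≤ f ⟨n, by omega⟩) : Antitone f := by
  clear hv
  have key : ∀ bv (hb : bv < T) av (ha : av < T), av ≤ bv → f ⟨bv, hb⟩ ≤ f ⟨av, ha⟩ := by
    intro bv
    induction bv with
    | zero =>
        intro hb av ha hav
        have : av = 0 := by omega
        subst this
        exact le_refl _
    | succ n ih =>
        intro hb av ha hav
        rcases Nat.lt_or_ge av (n + 1) with h1 | h1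
        · calc f ⟨n + 1, hb⟩ ≤ f ⟨n, by omega⟩ := h n hb
            _ ≤ f ⟨av, ha⟩ := ih (by omega) av ha (by omega)
        · have : av = n + 1 := by omega
          subst this
          exact le_refl _
  intro a b hab
  exact key b.val b.2 a.val a.2 hab

lemma vertex_antitone (hΔt : 0 < Δt) {k : ℕ} (hk : k ≤ T) :
    Antitone (ULvertex T Δt u l k) := by
  apply antitone_of_step hv
  intro n hn
  have hval1 : (ULvertex T Δt u l k) ⟨n + 1, hn⟩
      = if n + 1 < k then (ZExt u (n + 1 + 1) - ZExt u (n + 1)) / Δt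
        else (ZExt l (T - (n + 1)) - ZExt l (T - (n + 1) - 1)) / Δt := rfl
  have hval2 : (ULvertex T Δt u l k) ⟨n, by omega⟩
      = if n < k then (ZExt u (n + 1) - ZExt u n) / Δt
        else (ZExt l (T - n) - ZExt l (T - n - 1)) / Δt := rfl
  rw [hval1, hval2]
  by_cases h1 : n + 1 < k
  · rw [if_pos h1, if_pos (by omega : n < k)]
    have hcc := hv.1 (n + 1) (by omega) (by omega : n + 1 + 1 ≤ T)
    have h4 : n + 1 - 1 = n := by omega
    rw [h4] at hcc
    exact (div_le_div_iff_of_pos_right hΔt).mpr (by linarith)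
  · by_cases h2 : n < k
    · have hk1 : k = n + 1 := by omega
      subst hk1
      rw [if_neg h1, if_pos h2]
      have hcross := hv.2.2.2.2.2.2 (n + 1) (by omega) (by omega)
      have h4 : n + 1 - 1 = n := by omega
      rw [h4] at hcross
      have hcv := hv.2.2.2.1 (T - (n + 1)) (by omega) (by omega : T - (n + 1) + 1 ≤ T)
      have h5 : T - (n + 1) - 1 + 1 = T - (n + 1) := by omega
      exact (div_le_div_iff_of_pos_right hΔt).mpr (by linarith)
    · rw [if_neg h1, if_neg h2]
      have hcv := hv.2.2.2.1 (T - n - 1) (by omega) (by omega : T - n - 1 + 1 ≤ T)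
      have e1 : T - n - 1 - 1 = T - n - 2 := by omega
      have e2 : T - n - 1 + 1 = T - n := by omega
      rw [e1, e2] at hcv
      have e3 : T - (n + 1) = T - n - 1 := by omega
      rw [e3]
      have e4 : T - n - 1 - 1 = T - n - 2 := by omega
      rw [e4]
      exact (div_le_div_iff_of_pos_right hΔt).mpr (by linarith)

end Valid

section Valid2

variable (hv : ValidUL T u l)
include hv

lemma vertex_feas (hΔt : 0 < Δt) {k : ℕ} (hk : k ≤ T) :
    Feas T Δt u l (ULvertex T Δt u l k) := by
  apply feas_of_sorted hΔt _ (vertex_antitone hv hΔt hk)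
  intro m hm
  constructor
  · rw [SP_vertex hv hΔt.ne' hm]
    split_ifs with h
    · exact le_refl _
    · have h2 := cross_sum hv (show k ≤ m by omega) hm
      linarith
  · rw [SS_vertex hv hΔt.ne' hk hm]
    split_ifs with h
    · exact le_refl _
    · have h2 := cross_sum hv (show T - m ≤ k by omega) hk
      have h3 : T - (T - m) = m := by omega
      rw [h3] at h2
      linarith

omit hv in
lemma convex_ULset : Convex ℝ (ULset T Δt u l) := by
  intro x hx y hy a b ha hb hab
  intro S hS
  have hx1 := hx S hS
  have hy1 := hy S hS
  have hsum : Δt * ∑ t ∈ S, (a • x + b • y) t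
      = a * (Δt * ∑ t ∈ S, x t) + b * (Δt * ∑ t ∈ S, y t) := by
    simp only [Pi.add_apply, Pi.smul_apply, smul_eq_mul]
    rw [Finset.sum_add_distrib, ← Finset.mul_sum, ← Finset.mul_sum]
    ring
  have e1 : a * l S.card + b * l S.card = l S.card := by rw [← add_mul, hab, one_mul]
  have e2 : a * u S.card + b * u S.card = u S.card := by rw [← add_mul, hab, one_mul]
  have i1 := mul_le_mul_of_nonneg_left hx1.1 ha
  have i2 := mul_le_mul_of_nonneg_left hy1.1 hb
  have i3 := mul_le_mul_of_nonneg_left hx1.2 ha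
  have i4 := mul_le_mul_of_nonneg_left hy1.2 hb
  constructor
  · rw [hsum]; linarith
  · rw [hsum]; linarith

lemma hull_subset_ULset (hΔt : 0 < Δt) :
    convexHull ℝ {q : Fin T → ℝ |
      ∃ σ : Equiv.Perm (Fin T), ∃ k ≤ T, q = ULvertex T Δt u l k ∘ σ} ⊆ ULset T Δt u l := by
  apply convexHull_min _ convex_ULset
  rintro q ⟨σ, k, hk, rfl⟩
  exact (feas_iff _).mp (feas_comp (vertex_feas hv hΔt hk) σ)

end Valid2

section Strict

variable (hv : ValidUL T u l)
variable (hsu : ∀ j, 1 ≤ j → j + 1 ≤ T → ZExt u (j - 1) + ZExt u (j + 1) < 2 * ZExt u j)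
variable (hsl : ∀ j, 1 ≤ j → j + 1 ≤ T → 2 * ZExt l j < ZExt l (j - 1) + ZExt l (j + 1))
variable (hsc : ∀ j, 1 ≤ j → j ≤ T →
  ZExt l (T - j + 1) - ZExt l (T - j) < ZExt u j - ZExt u (j - 1))

include hv hsc in
lemma cross_sum_strict {a b : ℕ} (hab : a < b) (hbT : b ≤ T) :
    ZExt l (T - a) - ZExt l (T - b) < ZExt u b - ZExt u a := by
  have h1 := cross_sum hv (show a ≤ b - 1 by omega) (by omega)
  have h2 := hsc b (by omega) hbT
  have h3 : T - (b - 1) = T - b + 1 := by omega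
  rw [h3] at h1
  linarith

include hsu in
lemma tight_upper_eq_pref (hΔt : 0 < Δt) (p : Fin T → ℝ) (hp : Feas T Δt u l p)
    (hsort : Antitone p) {S : Finset (Fin T)}
    (htight : Δt * ∑ t ∈ S, p t = ZExt u S.card) : S = pref T S.card := by
  set m := S.card with hmdef
  have hm : m ≤ T := by
    have := Finset.card_le_univ S
    simpa [hmdef, Fintype.card_fin] using this
  by_contra hne
  rcases Nat.eq_zero_or_pos m with h0 | h0
  · apply hne
    have hS0 : S = ∅ := Finset.card_eq_zero.mp (by omega)
    rw [hS0, ← pref_zero]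
    congr 1
    omega
  have h1 : Δt * ∑ t ∈ S, p t ≤ SP Δt p m :=
    mul_le_mul_of_nonneg_left (sum_le_sum_pref p hsort S) hΔt.le
  have h2 : SP Δt p m ≤ ZExt u m := feas_SP hp hm
  have hSP : SP Δt p m = ZExt u m := le_antisymm h2 (htight ▸ h1)
  have hsums : ∑ t ∈ S, p t = ∑ t ∈ pref T m, p t := by
    apply mul_left_cancel₀ hΔt.ne'
    rw [htight, ← hSP, SP]
  have hcards : (pref T m).card = m := card_pref hm
  have hSdiff : (S \ pref T m).Nonempty := by
    rw [Finset.sdiff_nonempty]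
    intro hsub
    exact hne (Finset.eq_of_subset_of_card_le hsub (by rw [hcards]))
  obtain ⟨j, hj⟩ := hSdiff
  have hjm := Finset.mem_sdiff.mp hj
  have hjge : m ≤ (j : ℕ) := by
    have := hjm.2
    rw [mem_pref] at this
    omega
  have hmT' : m < T := lt_of_le_of_lt hjge j.2
  have hlt1 : m - 1 < T := by omega
  -- equal sums over symmetric differences
  have e1 := Finset.sum_inter_add_sum_sdiff S (pref T m) p
  have e2 := Finset.sum_inter_add_sum_sdiff (pref T m) S p
  have hdiffsum : ∑ t ∈ pref T m \ S, p t = ∑ t ∈ S \ pref T m, p t := by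
    have hic : S ∩ pref T m = pref T m ∩ S := Finset.inter_comm _ _
    rw [hic] at e1
    linarith [hsums]
  have c1 := Finset.card_sdiff_add_card_inter S (pref T m)
  have c2 := Finset.card_sdiff_add_card_inter (pref T m) S
  have hcdiff : (pref T m \ S).card = (S \ pref T m).card := by
    have hic : (S ∩ pref T m).card = (pref T m ∩ S).card := by rw [Finset.inter_comm]
    omega
  have hb1 : ∀ t ∈ pref T m \ S, p ⟨m - 1, hlt1⟩ ≤ p t := by
    intro t ht
    apply hsort
    rw [Fin.le_def]
    have := mem_pref.mp (Finset.mem_sdiff.mp ht).1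
    simpa using by omega
  have hb2 : ∀ t ∈ S \ pref T m, p t ≤ p ⟨m, hmT'⟩ := by
    intro t ht
    apply hsort
    rw [Fin.le_def]
    have := (Finset.mem_sdiff.mp ht).2
    rw [mem_pref] at this
    simpa using by omega
  have hcpos : 0 < (S \ pref T m).card := Finset.card_pos.mpr ⟨j, hj⟩
  have s1 := Finset.card_nsmul_le_sum _ _ _ hb1
  have s2 := Finset.sum_le_card_nsmul _ _ _ hb2
  rw [hcdiff, hdiffsum] at s1
  have hkey : p ⟨m - 1, hlt1⟩ ≤ p ⟨m, hmT'⟩ := by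
    have hchain := le_trans s1 s2
    rw [nsmul_eq_mul, nsmul_eq_mul] at hchain
    have hcR : (0 : ℝ) < ((S \ pref T m).card : ℝ) := by exact_mod_cast hcpos
    exact le_of_mul_le_mul_left hchain hcR
  have hkey2 : p ⟨m, hmT'⟩ ≤ p ⟨m - 1, hlt1⟩ := by
    apply hsort
    rw [Fin.le_def]
    simpa using by omega
  have heq : p ⟨m - 1, hlt1⟩ = p ⟨m, hmT'⟩ := le_antisymm hkey hkey2
  have hspm1 : SP Δt p m = SP Δt p (m - 1) + Δt * p ⟨m - 1, hlt1⟩ := by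
    have h := SP_succ (Δt := Δt) p hlt1
    rw [show m - 1 + 1 = m by omega] at h
    exact h
  have hspp1 : SP Δt p (m + 1) = SP Δt p m + Δt * p ⟨m, hmT'⟩ := SP_succ p hmT'
  have f1 : SP Δt p (m - 1) ≤ ZExt u (m - 1) := feas_SP hp (by omega)
  have f2 : SP Δt p (m + 1) ≤ ZExt u (m + 1) := feas_SP hp (by omega)
  have hstrict := hsu m (by omega) (by omega)
  have heqm : Δt * p ⟨m - 1, hlt1⟩ = Δt * p ⟨m, hmT'⟩ := by rw [heq]
  linarith

include hsl in
lemma tight_lower_eq_suff (hΔt : 0 < Δt) (p : Fin T → ℝ) (hp : Feas T Δt u l p)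
    (hsort : Antitone p) {S : Finset (Fin T)}
    (htight : Δt * ∑ t ∈ S, p t = ZExt l S.card) : S = suff T S.card := by
  set m := S.card with hmdef
  have hm : m ≤ T := by
    have := Finset.card_le_univ S
    simpa [hmdef, Fintype.card_fin] using this
  by_contra hne
  rcases Nat.eq_zero_or_pos m with h0 | h0
  · apply hne
    have : S = ∅ := Finset.card_eq_zero.mp (by omega)
    rw [this, ← suff_zero]
    congr 1
    omega
  have h1 : SS Δt p m ≤ Δt * ∑ t ∈ S, p t :=
    mul_le_mul_of_nonneg_left (sum_suff_le_sum p hsort S) hΔt.le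
  have h2 : ZExt l m ≤ SS Δt p m := feas_SS hp hm
  have hSS : SS Δt p m = ZExt l m := le_antisymm (htight ▸ h1) h2
  have hsums : ∑ t ∈ S, p t = ∑ t ∈ suff T m, p t := by
    apply mul_left_cancel₀ hΔt.ne'
    rw [htight, ← hSS, SS]
  have hcards : (suff T m).card = m := card_suff hm
  have hSdiff : (S \ suff T m).Nonempty := by
    rw [Finset.sdiff_nonempty]
    intro hsub
    exact hne (Finset.eq_of_subset_of_card_le hsub (by rw [hcards]))
  obtain ⟨j, hj⟩ := hSdiff
  have hjm := Finset.mem_sdiff.mp hj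
  have hjlt : (j : ℕ) < T - m := by
    have := hjm.2
    rw [mem_suff] at this
    omega
  have hmT' : m < T := by omega
  have hlt1 : T - m < T := by omega
  have hlt2 : T - m - 1 < T := by omega
  -- equal sums over symmetric differences
  have e1 := Finset.sum_inter_add_sum_sdiff S (suff T m) p
  have e2 := Finset.sum_inter_add_sum_sdiff (suff T m) S p
  have hdiffsum : ∑ t ∈ suff T m \ S, p t = ∑ t ∈ S \ suff T m, p t := by
    have hic : S ∩ suff T m = suff T m ∩ S := Finset.inter_comm _ _
    rw [hic] at e1
    linarith [hsums]
  have c1 := Finset.card_sdiff_add_card_inter S (suff T m)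
  have c2 := Finset.card_sdiff_add_card_inter (suff T m) S
  have hcdiff : (suff T m \ S).card = (S \ suff T m).card := by
    have hic : (S ∩ suff T m).card = (suff T m ∩ S).card := by rw [Finset.inter_comm]
    omega
  have hb1 : ∀ t ∈ suff T m \ S, p t ≤ p ⟨T - m, hlt1⟩ := by
    intro t ht
    apply hsort
    rw [Fin.le_def]
    have := mem_suff.mp (Finset.mem_sdiff.mp ht).1
    simpa using by omega
  have hb2 : ∀ t ∈ S \ suff T m, p ⟨T - m - 1, hlt2⟩ ≤ p t := by
    intro t ht
    apply hsort
    rw [Fin.le_def]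
    have := (Finset.mem_sdiff.mp ht).2
    rw [mem_suff] at this
    simpa using by omega
  have hcpos : 0 < (S \ suff T m).card := Finset.card_pos.mpr ⟨j, hj⟩
  have s1 := Finset.sum_le_card_nsmul _ _ _ hb1
  have s2 := Finset.card_nsmul_le_sum _ _ _ hb2
  rw [hcdiff, hdiffsum] at s1
  have hkey : p ⟨T - m - 1, hlt2⟩ ≤ p ⟨T - m, hlt1⟩ := by
    have hchain := le_trans s2 s1
    rw [nsmul_eq_mul, nsmul_eq_mul] at hchain
    have hcR : (0 : ℝ) < ((S \ suff T m).card : ℝ) := by exact_mod_cast hcpos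
    exact le_of_mul_le_mul_left hchain hcR
  have hkey2 : p ⟨T - m, hlt1⟩ ≤ p ⟨T - m - 1, hlt2⟩ := by
    apply hsort
    rw [Fin.le_def]
    simpa using by omega
  have heq : p ⟨T - m, hlt1⟩ = p ⟨T - m - 1, hlt2⟩ := le_antisymm hkey2 hkey
  have hssm1 : SS Δt p m = SS Δt p (m - 1) + Δt * p ⟨T - m, hlt1⟩ := by
    have h := SS_succ' (Δt := Δt) p (show m - 1 < T by omega)
      (i := ⟨T - m, hlt1⟩) (by simp; omega)
    rw [show m - 1 + 1 = m by omega] at h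
    exact h
  have hssp1 : SS Δt p (m + 1) = SS Δt p m + Δt * p ⟨T - m - 1, hlt2⟩ := SS_succ p hmT'
  have f1 : ZExt l (m - 1) ≤ SS Δt p (m - 1) := feas_SS hp (by omega)
  have f2 : ZExt l (m + 1) ≤ SS Δt p (m + 1) := feas_SS hp (by omega)
  have hstrict := hsl m (by omega) (by omega)
  have heqm : Δt * p ⟨T - m, hlt1⟩ = Δt * p ⟨T - m - 1, hlt2⟩ := by rw [heq]
  linarith

end Strict

section StrictMore

def nslack (T : ℕ) (Δt : ℝ) (u l : ℕ → ℝ) (p : Fin T → ℝ) : ℕ :=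
  (univ.filter (fun c : Con T => cval Δt p c ≠ cbd T u l c)).card

lemma cval_line (v d : Fin T → ℝ) (s : ℝ) (c : Con T) :
    cval Δt (fun t => v t + s * d t) c = cval Δt v c + s * cval Δt d c := by
  rcases c with ⟨S, b⟩
  have hs : ∑ t ∈ S, (v t + s * d t) = ∑ t ∈ S, v t + s * ∑ t ∈ S, d t := by
    rw [Finset.sum_add_distrib, Finset.mul_sum]
  cases b <;> simp [cval, hs] <;> ring

lemma cval_sub (pp vv : Fin T → ℝ) (c : Con T) :
    cval Δt (fun t => pp t - vv t) c = cval Δt pp c - cval Δt vv c := by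
  rcases c with ⟨S, b⟩
  have hs : ∑ t ∈ S, (pp t - vv t) = ∑ t ∈ S, pp t - ∑ t ∈ S, vv t :=
    Finset.sum_sub_distrib _ _
  cases b <;> simp [cval, hs] <;> ring

lemma cval_comp (p : Fin T → ℝ) (σ : Equiv.Perm (Fin T)) (c : Con T) :
    cval Δt (p ∘ σ) c = cval Δt p (c.1.image σ, c.2) := by
  rcases c with ⟨S, b⟩
  have hs : ∑ t ∈ S, (p ∘ σ) t = ∑ t ∈ S.image σ, p t := by
    rw [← sum_comp_perm p σ S]
    rfl
  cases b <;> simp only [cval, hs]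

lemma cbd_image (σ : Equiv.Perm (Fin T)) (c : Con T) :
    cbd T u l (c.1.image σ, c.2) = cbd T u l c := by
  rcases c with ⟨S, b⟩
  cases b <;> simp [cbd, Finset.card_image_of_injective _ σ.injective]

lemma nslack_comp (p : Fin T → ℝ) (σ : Equiv.Perm (Fin T)) :
    nslack T Δt u l (p ∘ σ) = nslack T Δt u l p := by
  unfold nslack
  apply Finset.card_nbij' (i := fun c : Con T => (c.1.image σ, c.2))
    (j := fun c : Con T => (c.1.image σ.symm, c.2))
  · intro c hc
    rw [Finset.mem_coe, Finset.mem_filter] at hc ⊢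
    refine ⟨Finset.mem_univ _, ?_⟩
    rw [← cval_comp p σ c, cbd_image (u := u) (l := l) σ c]
    exact hc.2
  · intro c hc
    rw [Finset.mem_coe, Finset.mem_filter] at hc ⊢
    refine ⟨Finset.mem_univ _, ?_⟩
    have h1 : cval Δt (p ∘ σ) (Finset.image (⇑σ.symm) c.1, c.2)
        = cval Δt p ((Finset.image (⇑σ.symm) c.1).image σ, c.2) :=
      cval_comp p σ _
    have h2 : (Finset.image (⇑σ.symm) c.1).image σ = c.1 := by
      rw [Finset.image_image]
      simp
    rw [h1, h2]
    have h3 : cbd T u l (Finset.image (⇑σ.symm) c.1, c.2) = cbd T u l c := by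
      rcases c with ⟨S, b⟩
      cases b <;> simp [cbd, Finset.card_image_of_injective _ σ.symm.injective]
    rw [h3]
    rcases c with ⟨S, b⟩
    exact hc.2
  · intro c _
    simp [Finset.image_image]
  · intro c _
    simp [Finset.image_image]

lemma exists_antitone (p : Fin T → ℝ) : ∃ σ : Equiv.Perm (Fin T), Antitone (p ∘ σ) := by
  refine ⟨Fin.revPerm.trans (Tuple.sort p), ?_⟩
  intro a b hab
  exact Tuple.monotone_sort p (Fin.rev_le_rev.mpr hab)

lemma hull_comp_perm {V : Set (Fin T → ℝ)}
    (hVperm : ∀ q ∈ V, ∀ σ : Equiv.Perm (Fin T), q ∘ σ ∈ V)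
    {x : Fin T → ℝ} (hx : x ∈ convexHull ℝ V) (σ : Equiv.Perm (Fin T)) :
    x ∘ σ ∈ convexHull ℝ V := by
  let L : (Fin T → ℝ) →ₗ[ℝ] (Fin T → ℝ) :=
    { toFun := fun y => y ∘ σ
      map_add' := fun a b => rfl
      map_smul' := fun c a => rfl }
  have himg : L '' V ⊆ V := by
    rintro _ ⟨y, hy, rfl⟩
    exact hVperm y hy σ
  have hmem : L x ∈ L '' (convexHull ℝ V) := ⟨x, hx, rfl⟩
  rw [L.image_convexHull] at hmem
  exact convexHull_mono himg hmem

variable (hv : ValidUL T u l)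
variable (hsc : ∀ j, 1 ≤ j → j ≤ T →
  ZExt l (T - j + 1) - ZExt l (T - j) < ZExt u j - ZExt u (j - 1))

include hv hsc in
lemma L_bound (hΔt : 0 < Δt) (p : Fin T → ℝ) (hp : Feas T Δt u l p)
    {k m' : ℕ} (hkT : k ≤ T) (hm'T : m' ≤ T)
    (hk : SP Δt p k = ZExt u k) (hm' : SS Δt p m' = ZExt l m') : m' ≤ T - k := by
  by_contra hgt
  have hTk : T - m' < k := by omega
  have hset : pref T k \ pref T (T - m') = suff T m' \ suff T (T - k) := by
    ext t
    simp only [Finset.mem_sdiff, mem_pref, mem_suff]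
    omega
  have hsub1 : pref T (T - m') ⊆ pref T k := fun t ht =>
    mem_pref.mpr (by have := mem_pref.mp ht; omega)
  have hsub2 : suff T (T - k) ⊆ suff T m' := fun t ht =>
    mem_suff.mpr (by have := mem_suff.mp ht; omega)
  have i1 := Finset.sum_sdiff (f := p) hsub1
  have i2 := Finset.sum_sdiff (f := p) hsub2
  have hkey : SP Δt p k - SP Δt p (T - m') = SS Δt p m' - SS Δt p (T - k) := by
    simp only [SP, SS]
    rw [← i1, ← i2, hset]
    ring
  have f1 := feas_SP hp (show T - m' ≤ T by omega)
  have f2 := feas_SS hp (show T - k ≤ T by omega)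
  have hstrict := cross_sum_strict hv hsc hTk hkT
  have hrw : T - (T - m') = m' := by omega
  rw [hrw] at hstrict
  rw [hk, hm'] at hkey
  linarith

end StrictMore

section StrictCore

variable (hv : ValidUL T u l)
variable (hsu : ∀ j, 1 ≤ j → j + 1 ≤ T → ZExt u (j - 1) + ZExt u (j + 1) < 2 * ZExt u j)
variable (hsl : ∀ j, 1 ≤ j → j + 1 ≤ T → 2 * ZExt l j < ZExt l (j - 1) + ZExt l (j + 1))
variable (hsc : ∀ j, 1 ≤ j → j ≤ T →
  ZExt l (T - j + 1) - ZExt l (T - j) < ZExt u j - ZExt u (j - 1))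

include hv hsu hsl hsc in
lemma strict_core (hΔt : 0 < Δt) :
    ∀ n (p : Fin T → ℝ), Feas T Δt u l p → nslack T Δt u l p = n →
      p ∈ convexHull ℝ {q : Fin T → ℝ |
        ∃ σ : Equiv.Perm (Fin T), ∃ k ≤ T, q = ULvertex T Δt u l k ∘ σ} := by
  set V : Set (Fin T → ℝ) := {q : Fin T → ℝ |
    ∃ σ : Equiv.Perm (Fin T), ∃ k ≤ T, q = ULvertex T Δt u l k ∘ σ} with hVdef
  have hVperm : ∀ q ∈ V, ∀ σ : Equiv.Perm (Fin T), q ∘ σ ∈ V := by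
    rintro q ⟨τ, k, hk, rfl⟩ σ
    exact ⟨σ.trans τ, k, hk, rfl⟩
  intro n
  induction n using Nat.strong_induction_on with
  | _ n IH =>
  intro p hp hn
  obtain ⟨σ, hσ⟩ := exists_antitone p
  set p' : Fin T → ℝ := p ∘ σ with hp'def
  have hp' : Feas T Δt u l p' := feas_comp hp σ
  have hback : p = p' ∘ (σ⁻¹ : Equiv.Perm (Fin T)) := by
    funext t
    simp [hp'def]
  -- max tight prefix
  set Uf : Finset ℕ := (Finset.range (T + 1)).filter (fun m => SP Δt p' m = ZExt u m)
    with hUfdef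
  have hU0 : 0 ∈ Uf := by
    rw [hUfdef, Finset.mem_filter]
    refine ⟨Finset.mem_range.mpr (by omega), ?_⟩
    simp [SP_zero, ZExt]
  have hUne : Uf.Nonempty := ⟨0, hU0⟩
  set k := Uf.max' hUne with hkdef
  have hkmem : k ∈ Uf := Uf.max'_mem hUne
  rw [hUfdef, Finset.mem_filter] at hkmem
  have hkT : k ≤ T := by
    have := Finset.mem_range.mp hkmem.1
    omega
  have hkSP : SP Δt p' k = ZExt u k := hkmem.2
  have hkmax : ∀ m, m ≤ T → SP Δt p' m = ZExt u m → m ≤ k := fun m hm hSP =>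
    Uf.le_max' m (by rw [hUfdef, Finset.mem_filter]; exact ⟨Finset.mem_range.mpr (by omega), hSP⟩)
  set v := ULvertex T Δt u l k with hvdef
  have hvfeas : Feas T Δt u l v := vertex_feas hv hΔt hkT
  have hvV : v ∈ V := ⟨Equiv.refl _, k, hkT, by funext t; simp; rfl⟩
  -- tight constraints transfer from p' to v
  have htrans : ∀ c : Con T, cval Δt p' c = cbd T u l c → cval Δt v c = cbd T u l c := by
    rintro ⟨S, b⟩ hc
    have hScard : S.card ≤ T := by
      have := Finset.card_le_univ S
      simpa [Fintype.card_fin] using this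
    cases b
    · -- lower constraint
      simp only [cval, cbd, Bool.false_eq_true, if_false] at hc ⊢
      have h1 : Δt * ∑ t ∈ S, p' t = ZExt l S.card := by linarith
      have hSeq := tight_lower_eq_suff hsl hΔt p' hp' hσ h1
      have hSS : SS Δt p' S.card = ZExt l S.card := by
        rw [SS, ← hSeq]
        exact h1
      have hmle : S.card ≤ T - k := L_bound hv hsc hΔt p' hp' hkT hScard hkSP hSS
      have hvSS : SS Δt v S.card = ZExt l S.card := by
        rw [hvdef, SS_vertex hv hΔt.ne' hkT hScard, if_pos hmle]
      have : Δt * ∑ t ∈ S, v t = ZExt l S.card := by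
        conv_lhs => rw [hSeq]
        rw [← SS]
        exact hvSS
      linarith
    · -- upper constraint
      simp only [cval, cbd, if_true] at hc ⊢
      have hSeq := tight_upper_eq_pref hsu hΔt p' hp' hσ hc
      have hSP : SP Δt p' S.card = ZExt u S.card := by
        rw [SP, ← hSeq]
        exact hc
      have hkm : S.card ≤ k := hkmax _ hScard hSP
      have hvSP : SP Δt v S.card = ZExt u S.card := by
        rw [hvdef, SP_vertex hv hΔt.ne' hScard, if_pos hkm]
      conv_lhs => rw [hSeq]
      rw [← SP]
      exact hvSP
  by_cases hpv : p' = v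
  · rw [hback, hpv]
    exact subset_convexHull ℝ V (hVperm v hvV σ⁻¹)
  · set d : Fin T → ℝ := fun t => p' t - v t with hddef
    have hcd : ∀ c, cval Δt d c = cval Δt p' c - cval Δt v c := fun c => by
      rw [hddef]; exact cval_sub p' v c
    have hdne : ∃ t, d t ≠ 0 := by
      by_contra hall
      push_neg at hall
      apply hpv
      funext t
      have := hall t
      rw [hddef] at this
      simp at this
      linarith
    have htight0 : ∀ c, cval Δt p' c = cbd T u l c → cval Δt d c = 0 := fun c hc => by
      rw [hcd, hc, htrans c hc]; ring
    set J : Finset (Con T) := univ.filter (fun c => 0 < cval Δt d c) with hJdef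
    have hJne : J.Nonempty := by
      obtain ⟨t0, ht0⟩ := hdne
      rcases lt_or_gt_of_ne ht0 with hneg | hpos
      · refine ⟨({t0}, false), ?_⟩
        rw [hJdef, Finset.mem_filter]
        refine ⟨Finset.mem_univ _, ?_⟩
        simp only [cval, Bool.false_eq_true, if_false, Finset.sum_singleton]
        nlinarith
      · refine ⟨({t0}, true), ?_⟩
        rw [hJdef, Finset.mem_filter]
        refine ⟨Finset.mem_univ _, ?_⟩
        simp only [cval, if_true, Finset.sum_singleton]
        nlinarith
    obtain ⟨c0, hc0J, hc0min⟩ := Finset.exists_min_image J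
      (fun c => (cbd T u l c - cval Δt v c) / cval Δt d c) hJne
    set tstar := (cbd T u l c0 - cval Δt v c0) / cval Δt d c0 with htstardef
    have hc0pos : 0 < cval Δt d c0 := by
      have h := hc0J
      rw [hJdef] at h
      exact (Finset.mem_filter.mp h).2
    have hratio : ∀ c ∈ J, 1 < (cbd T u l c - cval Δt v c) / cval Δt d c := by
      intro c hcJ
      have hcpos : 0 < cval Δt d c := by
        have h := hcJ
        rw [hJdef] at h
        exact (Finset.mem_filter.mp h).2
      have hcnt : cval Δt p' c ≠ cbd T u l c := by
        intro h
        have := htight0 c h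
        linarith
      have hlt : cval Δt p' c < cbd T u l c := lt_of_le_of_ne (hp' c) hcnt
      rw [lt_div_iff₀ hcpos, one_mul]
      have := hcd c
      linarith
    have htstar1 : 1 < tstar := hratio c0 hc0J
    have htstarne : tstar ≠ 0 := by positivity
    set q : Fin T → ℝ := fun t => v t + tstar * d t with hqdef
    have hcq : ∀ c, cval Δt q c = cval Δt v c + tstar * cval Δt d c := fun c => by
      rw [hqdef]; exact cval_line v d tstar c
    have hqfeas : Feas T Δt u l q := by
      intro c
      rw [hcq c]
      rcases le_or_gt (cval Δt d c) 0 with hle | hpos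
      · have h1 := hp' c
        have h2 := hcd c
        nlinarith
      · have hcJ : c ∈ J := by
          rw [hJdef, Finset.mem_filter]
          exact ⟨Finset.mem_univ _, hpos⟩
        have hm := hc0min c hcJ
        have hcancel : (cbd T u l c - cval Δt v c) / cval Δt d c * cval Δt d c
            = cbd T u l c - cval Δt v c := div_mul_cancel₀ _ hpos.ne'
        nlinarith [mul_le_mul_of_nonneg_right hm hpos.le]
    have hq_tight : ∀ c, cval Δt p' c = cbd T u l c → cval Δt q c = cbd T u l c := by
      intro c hc
      rw [hcq c, htight0 c hc, htrans c hc]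
      ring
    have hq_new : cval Δt q c0 = cbd T u l c0 := by
      rw [hcq c0, htstardef, div_mul_cancel₀ _ hc0pos.ne']
      ring
    have hp'_slack : cval Δt p' c0 ≠ cbd T u l c0 := by
      intro h
      have := htight0 c0 h
      linarith
    have hnsl : nslack T Δt u l q < nslack T Δt u l p' := by
      apply Finset.card_lt_card
      constructor
      · intro c hc
        rw [Finset.mem_filter] at hc ⊢
        exact ⟨Finset.mem_univ _, fun h => hc.2 (hq_tight c h)⟩
      · intro hrev
        have hc0mem : c0 ∈ univ.filter (fun c : Con T => cval Δt p' c ≠ cbd T u l c) := by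
          rw [Finset.mem_filter]
          exact ⟨Finset.mem_univ _, hp'_slack⟩
        have := hrev hc0mem
        rw [Finset.mem_filter] at this
        exact this.2 hq_new
    have hnp' : nslack T Δt u l p' = n := by
      rw [← hn, hp'def]
      exact nslack_comp p σ
    have hqhull := IH (nslack T Δt u l q) (by omega) q hqfeas rfl
    have hvhull : v ∈ convexHull ℝ V := subset_convexHull ℝ V hvV
    have hcomb : p' = (1 - 1/tstar) • v + (1/tstar) • q := by
      funext t
      simp only [Pi.add_apply, Pi.smul_apply, smul_eq_mul, hqdef, hddef]
      field_simp
      ring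
    have hp'hull : p' ∈ convexHull ℝ V := by
      rw [hcomb]
      have h0t : (0:ℝ) < tstar := by linarith
      refine (convex_convexHull ℝ V) hvhull hqhull ?_ ?_ (by ring)
      · have : 1/tstar < 1 := by
          rw [div_lt_one h0t]
          exact htstar1
        linarith
      · positivity
    rw [hback]
    exact hull_comp_perm hVperm hp'hull σ⁻¹

end StrictCore

section Pert

def Afun (T : ℕ) (Δt : ℝ) : ℕ → ℝ := fun m => Δt * ((m : ℝ) + (m : ℝ) * (4 * (T : ℝ) - (m : ℝ)))

def Bfun (Δt : ℝ) : ℕ → ℝ := fun m => Δt * (m : ℝ) * ((m : ℝ) - 1)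

def upert (T : ℕ) (Δt : ℝ) (u : ℕ → ℝ) (ε : ℝ) : ℕ → ℝ := fun m => u m + ε * Afun T Δt m

def lpert (T : ℕ) (Δt : ℝ) (l : ℕ → ℝ) (ε : ℝ) : ℕ → ℝ :=
  fun m => l m + (ε / (2 * (T : ℝ) + 1)) * Bfun Δt m

lemma ZExt_add (f g : ℕ → ℝ) (hg : g 0 = 0) (j : ℕ) :
    ZExt (fun m => f m + g m) j = ZExt f j + g j := by
  by_cases h : j = 0 <;> simp [ZExt, h, hg]

lemma ZExt_upert {ε : ℝ} (j : ℕ) :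
    ZExt (upert T Δt u ε) j = ZExt u j + ε * Afun T Δt j := by
  have := ZExt_add u (fun m => ε * Afun T Δt m) (by simp [Afun]) j
  exact this

lemma ZExt_lpert {ε : ℝ} (j : ℕ) :
    ZExt (lpert T Δt l ε) j = ZExt l j + (ε / (2 * (T : ℝ) + 1)) * Bfun Δt j := by
  have := ZExt_add l (fun m => (ε / (2 * (T : ℝ) + 1)) * Bfun Δt m) (by simp [Bfun]) j
  exact this

variable (hv : ValidUL T u l) (hΔt : 0 < Δt) (hT : 1 ≤ T)

include hv hΔt hT in
lemma pert_concave {ε : ℝ} (hε : 0 < ε) :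
    ∀ j, 1 ≤ j → j + 1 ≤ T →
      ZExt (upert T Δt u ε) (j - 1) + ZExt (upert T Δt u ε) (j + 1)
        < 2 * ZExt (upert T Δt u ε) j := by
  intro j h1 h2
  rw [ZExt_upert, ZExt_upert, ZExt_upert]
  have base := hv.1 j h1 h2
  have c1 : ((j - 1 : ℕ) : ℝ) = (j : ℝ) - 1 := by
    rw [Nat.cast_sub (by omega : 1 ≤ j)]
    norm_num
  have key : Afun T Δt (j - 1) + Afun T Δt (j + 1) = 2 * Afun T Δt j - 2 * Δt := by
    simp only [Afun]
    rw [c1]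
    push_cast
    ring
  have key2 : ε * Afun T Δt (j - 1) + ε * Afun T Δt (j + 1)
      = 2 * (ε * Afun T Δt j) - 2 * (ε * Δt) := by
    linear_combination ε * key
  have hpos := mul_pos hε hΔt
  linarith

include hv hΔt hT in
lemma pert_convex {ε : ℝ} (hε : 0 < ε) :
    ∀ j, 1 ≤ j → j + 1 ≤ T →
      2 * ZExt (lpert T Δt l ε) j
        < ZExt (lpert T Δt l ε) (j - 1) + ZExt (lpert T Δt l ε) (j + 1) := by
  intro j h1 h2
  rw [ZExt_lpert, ZExt_lpert, ZExt_lpert]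
  have base := hv.2.2.2.1 j h1 h2
  have c1 : ((j - 1 : ℕ) : ℝ) = (j : ℝ) - 1 := by
    rw [Nat.cast_sub (by omega : 1 ≤ j)]
    norm_num
  have key : Bfun Δt (j - 1) + Bfun Δt (j + 1) = 2 * Bfun Δt j + 2 * Δt := by
    simp only [Bfun]
    rw [c1]
    push_cast
    ring
  set δ := ε / (2 * (T : ℝ) + 1) with hδdef
  have hδ : 0 < δ := by
    rw [hδdef]
    positivity
  have key2 : δ * Bfun Δt (j - 1) + δ * Bfun Δt (j + 1)
      = 2 * (δ * Bfun Δt j) + 2 * (δ * Δt) := by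
    linear_combination δ * key
  have hpos := mul_pos hδ hΔt
  linarith

include hv hΔt hT in
lemma pert_cross {ε : ℝ} (hε : 0 < ε) :
    ∀ j, 1 ≤ j → j ≤ T →
      ZExt (lpert T Δt l ε) (T - j + 1) - ZExt (lpert T Δt l ε) (T - j)
        < ZExt (upert T Δt u ε) j - ZExt (upert T Δt u ε) (j - 1) := by
  intro j h1 h2
  rw [ZExt_lpert, ZExt_lpert, ZExt_upert, ZExt_upert]
  have base := hv.2.2.2.2.2.2 j h1 h2
  have c1 : ((j - 1 : ℕ) : ℝ) = (j : ℝ) - 1 := by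
    rw [Nat.cast_sub (by omega : 1 ≤ j)]
    norm_num
  have ca : ((T - j + 1 : ℕ) : ℝ) = ((T - j : ℕ) : ℝ) + 1 := by push_cast; ring
  set a := ((T - j : ℕ) : ℝ) with hadef
  have ha0 : 0 ≤ a := Nat.cast_nonneg _
  have haT : a ≤ (T : ℝ) := by
    rw [hadef]
    exact_mod_cast Nat.sub_le T j
  have hjr : (j : ℝ) ≤ (T : ℝ) := by exact_mod_cast h2
  have hTr : (1 : ℝ) ≤ (T : ℝ) := by exact_mod_cast hT
  have id1 : Bfun Δt (T - j + 1) - Bfun Δt (T - j) = 2 * Δt * a := by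
    simp only [Bfun]
    rw [ca, ← hadef]
    ring
  have id2 : Afun T Δt j - Afun T Δt (j - 1) = Δt * (4 * (T : ℝ) - 2 * (j : ℝ) + 2) := by
    simp only [Afun]
    rw [c1]
    ring
  set δ := ε / (2 * (T : ℝ) + 1) with hδdef
  have hpos1 : (0 : ℝ) < 2 * (T : ℝ) + 1 := by positivity
  have step1 : δ * (Bfun Δt (T - j + 1) - Bfun Δt (T - j)) ≤ ε * Δt := by
    rw [id1, hδdef, div_mul_eq_mul_div, div_le_iff₀ hpos1]
    nlinarith [mul_nonneg (mul_nonneg hε.le hΔt.le) (sub_nonneg.mpr haT),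
      mul_pos hε hΔt]
  have step2 : ε * Δt < ε * (Afun T Δt j - Afun T Δt (j - 1)) := by
    rw [id2]
    have h4 : (1 : ℝ) < 4 * (T : ℝ) - 2 * (j : ℝ) + 2 := by nlinarith
    nlinarith [mul_pos hε hΔt]
  have expand1 : δ * Bfun Δt (T - j + 1) - δ * Bfun Δt (T - j)
      = δ * (Bfun Δt (T - j + 1) - Bfun Δt (T - j)) := by ring
  have expand2 : ε * Afun T Δt j - ε * Afun T Δt (j - 1)
      = ε * (Afun T Δt j - Afun T Δt (j - 1)) := by ring
  linarith

include hv hΔt hT in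
lemma pert_valid {ε : ℝ} (hε : 0 < ε) :
    ValidUL T (upert T Δt u ε) (lpert T Δt l ε) := by
  refine ⟨fun j h1 h2 => (pert_concave hv hΔt hT hε j h1 h2).le, ?_, ?_, 
    fun j h1 h2 => (pert_convex hv hΔt hT hε j h1 h2).le, ?_, ?_,
    fun j h1 h2 => (pert_cross hv hΔt hT hε j h1 h2).le⟩
  · -- u' nonneg
    intro k hk
    rw [ZExt_upert]
    have base := hv.2.1 k hk
    have hkr : (k : ℝ) ≤ (T : ℝ) := by exact_mod_cast hk
    have hA : 0 ≤ Afun T Δt k := by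
      simp only [Afun]
      have h1 : (0:ℝ) ≤ 4 * (T:ℝ) - (k:ℝ) := by
        nlinarith [Nat.cast_nonneg (α := ℝ) T]
      exact mul_nonneg hΔt.le
        (add_nonneg (Nat.cast_nonneg _) (mul_nonneg (Nat.cast_nonneg _) h1))
    nlinarith [mul_nonneg hε.le hA]
  · -- u' increasing
    intro j hj
    rw [ZExt_upert, ZExt_upert]
    have base := hv.2.2.1 j hj
    have hjr : (j : ℝ) + 1 ≤ (T : ℝ) := by exact_mod_cast hj
    have key : Afun T Δt (j + 1) - Afun T Δt j = Δt * (4 * (T : ℝ) - 2 * (j : ℝ)) := by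
      simp only [Afun]
      push_cast
      ring
    nlinarith [mul_pos hε hΔt, mul_nonneg hε.le hΔt.le]
  · -- l' nonneg
    intro k hk
    rw [ZExt_lpert]
    have base := hv.2.2.2.2.1 k hk
    have hB : 0 ≤ Bfun Δt k := by
      simp only [Bfun]
      rcases Nat.eq_zero_or_pos k with h0 | h0
      · subst h0; simp
      · have h1 : (1 : ℝ) ≤ (k : ℝ) := by exact_mod_cast h0
        exact mul_nonneg (mul_nonneg hΔt.le (Nat.cast_nonneg _)) (by linarith)
    have hδ : (0:ℝ) ≤ ε / (2 * (T : ℝ) + 1) := by positivity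
    nlinarith [mul_nonneg hδ hB]
  · -- l' increasing
    intro j hj
    rw [ZExt_lpert, ZExt_lpert]
    have base := hv.2.2.2.2.2.1 j hj
    have key : Bfun Δt (j + 1) - Bfun Δt j = 2 * Δt * (j : ℝ) := by
      simp only [Bfun]
      push_cast
      ring
    have hδ : (0:ℝ) ≤ ε / (2 * (T : ℝ) + 1) := by positivity
    nlinarith [mul_nonneg (mul_nonneg hδ hΔt.le) (Nat.cast_nonneg (α := ℝ) j)]

include hΔt hT in
lemma feas_shift {ε : ℝ} (hε : 0 < ε) {p : Fin T → ℝ} (hp : Feas T Δt u l p) :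
    Feas T Δt (upert T Δt u ε) (lpert T Δt l ε) (fun t => p t + ε) := by
  rintro ⟨S, b⟩
  have hScard : S.card ≤ T := by
    have := Finset.card_le_univ S
    simpa [Fintype.card_fin] using this
  have hcr : ((S.card : ℕ) : ℝ) ≤ (T : ℝ) := by exact_mod_cast hScard
  have hcr0 : (0:ℝ) ≤ ((S.card : ℕ) : ℝ) := Nat.cast_nonneg _
  have hsum : ∑ t ∈ S, (p t + ε) = ∑ t ∈ S, p t + (S.card : ℝ) * ε := by
    rw [Finset.sum_add_distrib, Finset.sum_const, nsmul_eq_mul]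
  have hpos1 : (0 : ℝ) < 2 * (T : ℝ) + 1 := by positivity
  cases b
  · have base := hp (S, false)
    simp only [cval, cbd, Bool.false_eq_true, if_false] at base ⊢
    rw [ZExt_lpert, hsum]
    have hkey : (ε / (2 * (T : ℝ) + 1)) * Bfun Δt S.card ≤ Δt * ((S.card : ℝ) * ε) := by
      simp only [Bfun]
      rw [div_mul_eq_mul_div, div_le_iff₀ hpos1]
      nlinarith [mul_nonneg (mul_nonneg (mul_nonneg hε.le hΔt.le) hcr0)
        (sub_nonneg.mpr hcr), mul_nonneg (mul_nonneg hε.le hΔt.le) hcr0]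
    nlinarith [base, hkey]
  · have base := hp (S, true)
    simp only [cval, cbd, if_true] at base ⊢
    rw [ZExt_upert, hsum]
    have hkey : Δt * ((S.card : ℝ) * ε) ≤ ε * Afun T Δt S.card := by
      simp only [Afun]
      nlinarith [mul_nonneg (mul_nonneg (mul_nonneg hε.le hΔt.le) hcr0)
        (sub_nonneg.mpr hcr), mul_nonneg (mul_nonneg hε.le hΔt.le) hcr0]
    nlinarith [base, hkey]

include hΔt hT in
lemma vertex_pert_bound {ε : ℝ} (hε : 0 < ε) (k : ℕ) (t : Fin T) :
    |ULvertex T Δt (upert T Δt u ε) (lpert T Δt l ε) k t - ULvertex T Δt u l k t|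
      ≤ ε * (4 * T) := by
  have htT : (t : ℕ) < T := t.2
  have hTr : (1 : ℝ) ≤ (T : ℝ) := by exact_mod_cast hT
  have htr : ((t : ℕ) : ℝ) ≤ (T : ℝ) - 1 := by
    have : (t : ℕ) + 1 ≤ T := htT
    have := (Nat.cast_le (α := ℝ)).mpr this
    push_cast at this
    linarith
  have htr0 : (0:ℝ) ≤ ((t : ℕ) : ℝ) := Nat.cast_nonneg _
  unfold ULvertex
  by_cases hcase : (t : ℕ) < k
  · rw [if_pos hcase, if_pos hcase]
    rw [ZExt_upert, ZExt_upert]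
    have key : (ZExt u ((t:ℕ) + 1) + ε * Afun T Δt ((t:ℕ) + 1)
          - (ZExt u (t:ℕ) + ε * Afun T Δt (t:ℕ))) / Δt
        - (ZExt u ((t:ℕ) + 1) - ZExt u (t:ℕ)) / Δt
        = ε * (4 * (T:ℝ) - 2 * ((t:ℕ):ℝ)) := by
      have hA : Afun T Δt ((t:ℕ) + 1) - Afun T Δt (t:ℕ) = Δt * (4 * (T:ℝ) - 2 * ((t:ℕ):ℝ)) := by
        simp only [Afun]
        push_cast
        ring
      field_simp
      linear_combination ε * hA
    rw [key]
    rw [abs_of_nonneg (by nlinarith)]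
    nlinarith
  · rw [if_neg hcase, if_neg hcase]
    rw [ZExt_lpert, ZExt_lpert]
    set a := ((T - (t:ℕ) - 1 : ℕ) : ℝ) with hadef
    have hca : ((T - (t:ℕ) : ℕ) : ℝ) = a + 1 := by
      rw [hadef]
      have h1 : T - (t:ℕ) - 1 + 1 = T - (t:ℕ) := by omega
      rw [← h1]
      push_cast
      ring
    have ha0 : 0 ≤ a := Nat.cast_nonneg _
    have haT : a ≤ (T : ℝ) := by
      rw [hadef]
      have h9 : T - (t:ℕ) - 1 ≤ T := by omega
      exact_mod_cast h9
    set δ := ε / (2 * (T : ℝ) + 1) with hδdef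
    have hpos1 : (0 : ℝ) < 2 * (T : ℝ) + 1 := by positivity
    have hδ0 : 0 < δ := by rw [hδdef]; positivity
    have key : (ZExt l (T - (t:ℕ)) + δ * Bfun Δt (T - (t:ℕ))
          - (ZExt l (T - (t:ℕ) - 1) + δ * Bfun Δt (T - (t:ℕ) - 1))) / Δt
        - (ZExt l (T - (t:ℕ)) - ZExt l (T - (t:ℕ) - 1)) / Δt
        = δ * (2 * a) := by
      have hB : Bfun Δt (T - (t:ℕ)) - Bfun Δt (T - (t:ℕ) - 1) = Δt * (2 * a) := by
        simp only [Bfun]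
        rw [hca, ← hadef]
        ring
      field_simp
      linear_combination δ * hB
    rw [key]
    rw [abs_of_nonneg (by positivity)]
    have h1 : δ * (2 * a) ≤ ε := by
      rw [hδdef, div_mul_eq_mul_div, div_le_iff₀ hpos1]
      nlinarith [mul_nonneg hε.le (sub_nonneg.mpr haT)]
    nlinarith

end Pert

section Final

variable (hv : ValidUL T u l)

include hv in
lemma ULset_subset_hull (hT : 1 ≤ T) (hΔt : 0 < Δt) :
    ULset T Δt u l ⊆ convexHull ℝ {q : Fin T → ℝ |
      ∃ σ : Equiv.Perm (Fin T), ∃ k ≤ T, q = ULvertex T Δt u l k ∘ σ} := by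
  set V : Set (Fin T → ℝ) := {q : Fin T → ℝ |
    ∃ σ : Equiv.Perm (Fin T), ∃ k ≤ T, q = ULvertex T Δt u l k ∘ σ} with hVdef
  intro p hpUL
  have hp : Feas T Δt u l p := (feas_iff p).mpr hpUL
  have hVfin : V.Finite := by
    apply Set.Finite.subset (Set.finite_range
      (fun x : Equiv.Perm (Fin T) × Fin (T + 1) =>
        ULvertex T Δt u l ((x.2 : ℕ)) ∘ (x.1 : Equiv.Perm (Fin T))))
    rintro q ⟨σ, k, hk, rfl⟩
    exact ⟨(σ, ⟨k, by omega⟩), rfl⟩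
  have hclosed : IsClosed (convexHull ℝ V) := hVfin.isClosed_convexHull ℝ
  rw [← hclosed.closure_eq]
  rw [Metric.mem_closure_iff]
  intro εg hεg
  set ε := εg / (2 * (4 * (T : ℝ) + 1)) with hεdef
  have hTpos : (0:ℝ) < (T:ℝ) := by
    have : (1:ℝ) ≤ (T:ℝ) := by exact_mod_cast hT
    linarith
  have hε : 0 < ε := by
    rw [hεdef]
    positivity
  have hvalid' := pert_valid hv hΔt hT hε
  have hsu' := pert_concave hv hΔt hT hε
  have hsl' := pert_convex hv hΔt hT hε
  have hsc' := pert_cross hv hΔt hT hε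
  have hfeas' := feas_shift hΔt hT hε hp
  have hphull := strict_core hvalid' hsu' hsl' hsc' hΔt
    (nslack T Δt (upert T Δt u ε) (lpert T Δt l ε) (fun t => p t + ε)) _ hfeas' rfl
  rw [_root_.convexHull_eq] at hphull
  obtain ⟨ι, tf, w, z, hw0, hw1, hzV, hcm⟩ := hphull
  have hchoice : ∀ i : ι, ∃ (σ : Equiv.Perm (Fin T)) (k : ℕ), k ≤ T ∧
      (i ∈ tf → z i = ULvertex T Δt (upert T Δt u ε) (lpert T Δt l ε) k ∘ σ) := by
    intro i
    by_cases hi : i ∈ tf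
    · obtain ⟨σ, k, hk, hzi⟩ := hzV i hi
      exact ⟨σ, k, hk, fun _ => hzi⟩
    · exact ⟨1, 0, by omega, fun h => absurd h hi⟩
  choose σf kf hkf hzf using hchoice
  set base : ι → (Fin T → ℝ) := fun i => ULvertex T Δt u l (kf i) ∘ (σf i) with hbasedef
  have hbaseV : ∀ i ∈ tf, base i ∈ V := fun i _ => ⟨σf i, kf i, hkf i, rfl⟩
  set y := tf.centerMass w base with hydef
  have hyhull : y ∈ convexHull ℝ V :=
    Finset.centerMass_mem_convexHull tf hw0 (by rw [hw1]; norm_num) hbaseV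
  refine ⟨y, hyhull, ?_⟩
  have hcm' : (fun t => p t + ε) = ∑ i ∈ tf, w i • z i := by
    rw [← hcm, Finset.centerMass_eq_of_sum_1 _ _ hw1]
  have hy' : y = ∑ i ∈ tf, w i • base i := by
    rw [hydef, Finset.centerMass_eq_of_sum_1 _ _ hw1]
  have hdist : ∀ t : Fin T, |p t - y t| ≤ (4 * (T:ℝ) + 1) * ε := by
    intro t
    have h1 := congrFun hcm' t
    simp only [Finset.sum_apply, Pi.smul_apply, smul_eq_mul] at h1
    have h2 := congrFun hy' t
    simp only [Finset.sum_apply, Pi.smul_apply, smul_eq_mul] at h2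
    have h3 : ∑ i ∈ tf, w i * (z i t - base i t)
        = ∑ i ∈ tf, w i * z i t - ∑ i ∈ tf, w i * base i t := by
      rw [← Finset.sum_sub_distrib]
      apply Finset.sum_congr rfl
      intros
      ring
    have hid : p t - y t = (∑ i ∈ tf, w i * (z i t - base i t)) - ε := by
      rw [h3, ← h1, h2]
      ring
    have hterm : ∀ i ∈ tf, |z i t - base i t| ≤ ε * (4 * (T:ℝ)) := by
      intro i hi
      rw [hzf i hi, hbasedef]
      exact vertex_pert_bound hΔt hT hε (kf i) (σf i t)
    have habs : |∑ i ∈ tf, w i * (z i t - base i t)| ≤ ε * (4 * (T:ℝ)) := by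
      calc |∑ i ∈ tf, w i * (z i t - base i t)|
          ≤ ∑ i ∈ tf, |w i * (z i t - base i t)| := Finset.abs_sum_le_sum_abs _ _
        _ ≤ ∑ i ∈ tf, w i * (ε * (4 * (T:ℝ))) := by
            apply Finset.sum_le_sum
            intro i hi
            rw [abs_mul, abs_of_nonneg (hw0 i hi)]
            exact mul_le_mul_of_nonneg_left (hterm i hi) (hw0 i hi)
        _ = ε * (4 * (T:ℝ)) := by rw [← Finset.sum_mul, hw1, one_mul]
    rw [hid]
    have htri : |(∑ i ∈ tf, w i * (z i t - base i t)) - ε|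
        ≤ |∑ i ∈ tf, w i * (z i t - base i t)| + |ε| := by
      have := abs_add_le (∑ i ∈ tf, w i * (z i t - base i t)) (-ε)
      rw [abs_neg] at this
      simpa [sub_eq_add_neg] using this
    rw [abs_of_pos hε] at htri
    linarith
  have hd2 : dist p y ≤ (4 * (T:ℝ) + 1) * ε := by
    rw [dist_pi_le_iff (by positivity)]
    intro t
    rw [Real.dist_eq]
    exact hdist t
  have hfin : (4 * (T:ℝ) + 1) * ε = εg / 2 := by
    rw [hεdef]
    field_simp
  linarith

end Final

end ULProof

/-- `F(u,l)` equals the convex hull of the permutations of the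
`T+1` vertex vectors `p^(0), …, p^(T)`. -/
theorem ULset_eq_convexHull_vertices (T : ℕ) (hT : 1 ≤ T) (Δt : ℝ) (hΔt : 0 < Δt)
    (u l : ℕ → ℝ) (hvalid : ValidUL T u l) :
    ULset T Δt u l =
      convexHull ℝ {q : Fin T → ℝ |
        ∃ σ : Equiv.Perm (Fin T), ∃ k ≤ T, q = ULvertex T Δt u l k ∘ σ} := by
  apply Set.Subset.antisymm
  · exact ULProof.ULset_subset_hull hvalid hT hΔt
  · exact ULProof.hull_subset_ULset hvalid hΔt

end
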